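/- Let ψ : A → Set Λ be a semi-transition map on a commutative ring A, and suppose A is a pm-ring. Then the maximal spectrum Max(A) (the set of maximal ideals of A with the Zariski topology) is homeomorphic to the maximal spectrum Max(A_S) of the localization A_S, where S = {a ∈ A | ψ(a) = ∅}. -/

import Mathlib

/-- A semi-transition map on a commutative ring `A` with values in subsets of a
nonempty set `Λ`. -/
structure IsSemiTransition {A : Type*} [CommRing A] {Λ : Type*} (ψ : A → Set Λ) : Prop where
  nonempty : Nonempty Λ
  map_mul : ∀ a b : A, ψ (a * b) = ψ a ∪ ψ b
  map_one : ψ 1 = ∅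
  eq_univ_iff : ∀ a : A, ψ a = Set.univ ↔ a = 0
  inter_eq : ∀ a b : A, ∃ c ∈ Ideal.span {a, b}, ψ a ∩ ψ b = ψ c ∧ ψ c ⊆ ψ (a + b)
  principal : ∀ a b : A, ψ a ∩ ψ b = ∅ →
    ∃ m n : ℕ, 0 < m ∧ 0 < n ∧ (Ideal.span {a ^ m, b ^ n} : Ideal A).IsPrincipal

/-- A pm-ring: every prime ideal is contained in a unique maximal ideal. -/
def IsPMRing (A : Type*) [CommRing A] : Prop :=
  ∀ P : Ideal A, P.IsPrime → ∃! M : Ideal A, M.IsMaximal ∧ P ≤ M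

/-- The maximal spectrum of a commutative ring: the set of maximal ideals. -/
def MaxSpec (A : Type*) [CommRing A] : Type _ := {M : Ideal A // M.IsMaximal}

/-- The Zariski topology on the maximal spectrum: the sets
`{M | a ∈ M}` form a base of closed sets. -/
instance (A : Type*) [CommRing A] : TopologicalSpace (MaxSpec A) :=
  TopologicalSpace.generateFrom {V | ∃ a : A, V = {M : MaxSpec A | a ∈ M.1}ᶜ}

section Aux

variable {A : Type*} [CommRing A] {Λ : Type*} {ψ : A → Set Λ}

private lemma psiPow (hψ : IsSemiTransition ψ) (a : A) : ∀ m : ℕ, ψ (a ^ (m + 1)) = ψ a := by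
  intro m
  induction m with
  | zero => simp
  | succ k ih => rw [pow_succ, hψ.map_mul, ih, Set.union_self]

private lemma psiPow' (hψ : IsSemiTransition ψ) (a : A) {m : ℕ} (hm : 0 < m) :
    ψ (a ^ m) = ψ a := by
  obtain ⟨k, rfl⟩ : ∃ k, m = k + 1 := ⟨m - 1, (Nat.succ_pred_eq_of_pos hm).symm⟩
  exact psiPow hψ a k

/-- The key algebraic consequence of the semi-transition axioms:
if `ψ (p + u) = ∅` then there are `e, f` with `α * e + β * f = 1`, where
`e` lies in every `S`-disjoint prime containing `p`, and `f` in every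
`S`-disjoint prime containing `u`. -/
private lemma core (hψ : IsSemiTransition ψ) {p u : A} (hs : ψ (p + u) = ∅) :
    ∃ e f α β : A, α * e + β * f = 1 ∧
      (∀ P : Ideal A, P.IsPrime → (∀ t ∈ P, ψ t ≠ ∅) → p ∈ P → e ∈ P) ∧
      (∀ P : Ideal A, P.IsPrime → (∀ t ∈ P, ψ t ≠ ∅) → u ∈ P → f ∈ P) := by
  obtain ⟨c, -, hc2, hc3⟩ := hψ.inter_eq p u
  have hpu : ψ p ∩ ψ u = ∅ := by
    rw [hc2]
    exact Set.eq_empty_of_subset_empty (hs ▸ hc3)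
  obtain ⟨m, n, hm, hn, ⟨d, hd⟩⟩ := hψ.principal p u hpu
  have hpm : p ^ m ∈ Submodule.span A ({d} : Set A) := hd ▸ Ideal.subset_span (by simp)
  have hun : u ^ n ∈ Submodule.span A ({d} : Set A) := hd ▸ Ideal.subset_span (by simp)
  obtain ⟨e, he⟩ := Ideal.mem_span_singleton.mp hpm
  obtain ⟨f, hf⟩ := Ideal.mem_span_singleton.mp hun
  have hdmem : d ∈ Ideal.span ({p ^ m, u ^ n} : Set A) := by
    rw [hd]; exact Ideal.mem_span_singleton_self d
  obtain ⟨α, β, hαβ⟩ := Ideal.mem_span_pair.mp hdmem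
  have hψd : ψ d = ∅ := by
    have h1 : ψ d ⊆ ψ p := by
      have h := hψ.map_mul d e
      rw [← he, psiPow' hψ p hm] at h
      rw [h]; exact Set.subset_union_left
    have h2 : ψ d ⊆ ψ u := by
      have h := hψ.map_mul d f
      rw [← hf, psiPow' hψ u hn] at h
      rw [h]; exact Set.subset_union_left
    exact Set.eq_empty_of_subset_empty (by rw [← hpu]; exact Set.subset_inter h1 h2)
  have hd0 : d * (α * e + β * f - 1) = 0 := by
    have h : α * (d * e) + β * (d * f) = d := by rw [← he, ← hf]; exact hαβ
    linear_combination h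
  have h1 : α * e + β * f = 1 := by
    have h := hψ.map_mul d (α * e + β * f - 1)
    rw [hd0, (hψ.eq_univ_iff (0 : A)).mpr rfl, hψd, Set.empty_union] at h
    have := (hψ.eq_univ_iff _).mp h.symm
    linear_combination this
  refine ⟨e, f, α, β, h1, ?_, ?_⟩
  · intro P hP hPd hp
    have hdP : d ∉ P := fun hmem => hPd d hmem hψd
    have hpmP : p ^ m ∈ P := (hP.pow_mem_iff_mem m hm).mpr hp
    have hde : d * e ∈ P := he ▸ hpmP
    exact (hP.mem_or_mem hde).resolve_left hdP
  · intro P hP hPd hu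
    have hdP : d ∉ P := fun hmem => hPd d hmem hψd
    have hunP : u ^ n ∈ P := (hP.pow_mem_iff_mem n hn).mpr hu
    have hdf : d * f ∈ P := hf ▸ hunP
    exact (hP.mem_or_mem hdf).resolve_left hdP

end Aux

/-- Theorem: if `A` carries a semi-transition map `ψ` and `A` is a pm-ring, then
`Max(A)` is homeomorphic to `Max(A_S)`, where `S = {a | ψ a = ∅}`. -/
theorem maxSpec_homeomorph_localization {A : Type*} [CommRing A] {Λ : Type*}
    (ψ : A → Set Λ) (hψ : IsSemiTransition ψ) (hpm : IsPMRing A)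
    (S : Submonoid A) (hS : (S : Set A) = {a : A | ψ a = ∅}) :
    Nonempty (MaxSpec A ≃ₜ MaxSpec (Localization S)) := by
  classical
  set L := Localization S with hLdef
  let f : A →+* L := algebraMap A L
  have hmemS : ∀ a : A, a ∈ S ↔ ψ a = ∅ := by
    intro a
    constructor
    · intro h
      have h' : a ∈ (S : Set A) := h
      rwa [hS] at h'
    · intro h
      show a ∈ (S : Set A)
      rw [hS]; exact h
  have hone : (1 : A) ∈ S := (hmemS 1).mpr hψ.map_one
  -- contractions of proper ideals meet S trivially
  have hdisj : ∀ Q : Ideal L, Q ≠ ⊤ → ∀ t ∈ Ideal.comap f Q, ψ t ≠ ∅ := by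
    intro Q hQ t ht hψt
    exact hQ (Ideal.eq_top_of_isUnit_mem Q ht
      (IsLocalization.map_units L (⟨t, (hmemS t).mpr hψt⟩ : S)))
  -- the inverse trick
  have hinv : ∀ Q : Ideal L, Q.IsMaximal → ∀ a : A, f a ∉ Q →
      ∃ p ∈ Ideal.comap f Q, ∃ x : A, ψ (p + x * a) = ∅ := by
    intro Q hQ a ha
    obtain ⟨z, i, hiQ, hzi⟩ := hQ.exists_inv ha
    obtain ⟨x, s, hxs⟩ := IsLocalization.exists_mk'_eq (M := S) (S := L) z
    refine ⟨(s : A) - x * a, ?_, x, ?_⟩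
    · show f ((s : A) - x * a) ∈ Q
      have h2 : IsLocalization.mk' L x s * f (s : A) = f x :=
        IsLocalization.mk'_spec L x s
      have h3 : f (s : A) * (IsLocalization.mk' L x s * f a + i) = f (s : A) := by
        rw [hxs, hzi, mul_one]
      have h1 : f ((s : A) - x * a) = f (s : A) * i := by
        rw [map_sub, map_mul]
        linear_combination f a * h2 - h3
      rw [h1]
      exact Q.mul_mem_left _ hiQ
    · have h4 : (s : A) - x * a + x * a = (s : A) := by ring
      rw [h4]
      exact (hmemS s).mp s.2
  have hct : ∀ Q : MaxSpec L, (Ideal.comap f Q.1).IsPrime := by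
    intro Q
    haveI := Q.2.isPrime
    exact Ideal.IsPrime.comap f
  -- the map Sig : Max(A_S) → Max(A)
  have hSigAll : ∀ Q : MaxSpec L, ∃ M : MaxSpec A, Ideal.comap f Q.1 ≤ M.1 ∧
      ∀ N : Ideal A, N.IsMaximal → Ideal.comap f Q.1 ≤ N → N = M.1 := by
    intro Q
    obtain ⟨M, ⟨hM1, hM2⟩, hMu⟩ := hpm _ (hct Q)
    exact ⟨⟨M, hM1⟩, hM2, fun N h1 h2 => hMu N ⟨h1, h2⟩⟩
  choose Sig hSig_le hSig_uniq using hSigAll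
  -- injectivity
  have hSig_inj : Function.Injective Sig := by
    intro Q1 Q2 hQ
    by_contra hne
    have hct_ne : ¬ Ideal.comap f Q1.1 ≤ Ideal.comap f Q2.1 := by
      intro hle
      have hmap : Q1.1 ≤ Q2.1 := by
        have h := Ideal.map_mono (f := f) hle
        rwa [IsLocalization.map_comap S L, IsLocalization.map_comap S L] at h
      exact hne (Subtype.ext (Q1.2.eq_of_le Q2.2.ne_top hmap))
    obtain ⟨a, ha1, ha2⟩ := SetLike.not_le_iff_exists.mp hct_ne
    have ha2' : f a ∉ Q2.1 := fun h => ha2 (Ideal.mem_comap.mpr h)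
    obtain ⟨p, hp, x, hpx⟩ := hinv Q2.1 Q2.2 a ha2'
    obtain ⟨e, fe, α, β, h1, hE, hF⟩ := core hψ hpx
    have he : e ∈ Ideal.comap f Q2.1 := hE _ (hct Q2) (hdisj Q2.1 Q2.2.ne_top) hp
    have hu : x * a ∈ Ideal.comap f Q1.1 := Ideal.mul_mem_left _ x ha1
    have hf : fe ∈ Ideal.comap f Q1.1 := hF _ (hct Q1) (hdisj Q1.1 Q1.2.ne_top) hu
    have hone1 : (1 : A) ∈ (Sig Q1).1 := by
      have hmem : α * e + β * fe ∈ (Sig Q1).1 := by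
        refine Ideal.add_mem _ (Ideal.mul_mem_left _ _ ?_) (Ideal.mul_mem_left _ _ ?_)
        · rw [hQ]; exact hSig_le Q2 he
        · exact hSig_le Q1 hf
      rwa [h1] at hmem
    exact (Sig Q1).2.ne_top ((Ideal.eq_top_iff_one _).mpr hone1)
  -- surjectivity
  have hSig_surj : ∀ M : MaxSpec A, ∃ Q, Sig Q = M := by
    intro M
    have hMp : M.1.IsPrime := M.2.isPrime
    have hone_nmem : (1 : A) ∉ M.1 := fun h => M.2.ne_top ((Ideal.eq_top_iff_one _).mpr h)
    let T0 : Submonoid A :=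
      { carrier := {y | ∃ s c : A, s ∈ S ∧ c ∉ M.1 ∧ s * c = y}
        one_mem' := ⟨1, 1, hone, hone_nmem, mul_one 1⟩
        mul_mem' := by
          rintro y1 y2 ⟨s1, c1, hs1, hc1, rfl⟩ ⟨s2, c2, hs2, hc2, rfl⟩
          exact ⟨s1 * s2, c1 * c2, S.mul_mem hs1 hs2,
            fun h => ((hMp.mem_or_mem h).elim hc1 hc2), by ring⟩ }
    have h0T : (0 : A) ∉ T0 := by
      rintro ⟨s, c, hs, hc, hsc⟩
      have h := (hψ.eq_univ_iff (s * c)).mpr hsc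
      rw [hψ.map_mul, (hmemS s).mp hs, Set.empty_union] at h
      exact hc (((hψ.eq_univ_iff c).mp h) ▸ M.1.zero_mem)
    have hdisj0 : Disjoint ((⊥ : Ideal A) : Set A) (T0 : Set A) := by
      rw [Set.disjoint_left]
      intro y hy hyT
      rw [SetLike.mem_coe, Ideal.mem_bot] at hy
      subst hy; exact h0T hyT
    obtain ⟨P0, hP0p, -, hP0d⟩ := Ideal.exists_le_prime_disjoint ⊥ T0 hdisj0
    have hP0M : P0 ≤ M.1 := by
      intro t ht
      by_contra htM
      exact Set.disjoint_left.mp hP0d ht ⟨1, t, hone, htM, one_mul t⟩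
    have hP0S : Disjoint ((S : Submonoid A) : Set A) (P0 : Set A) := by
      rw [Set.disjoint_left]
      intro s hsS hsP
      exact Set.disjoint_left.mp hP0d hsP ⟨s, 1, hsS, hone_nmem, mul_one s⟩
    have hP0dS : ∀ t ∈ P0, ψ t ≠ ∅ := by
      intro t ht hψt
      exact Set.disjoint_right.mp hP0S ht ((hmemS t).mpr hψt)
    have hmapne : Ideal.map f P0 ≠ ⊤ := by
      intro htop
      have h : Ideal.comap f (Ideal.map f P0) = P0 := by
        exact IsLocalization.comap_map_of_isPrime_disjoint S L hP0p hP0S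
      rw [htop, Ideal.comap_top] at h
      exact hP0p.ne_top h.symm
    obtain ⟨Q, hQmax, hQge⟩ := Ideal.exists_le_maximal _ hmapne
    refine ⟨⟨Q, hQmax⟩, ?_⟩
    have hP0Q : P0 ≤ Ideal.comap f Q := le_trans Ideal.le_comap_map (Ideal.comap_mono hQge)
    obtain ⟨N, -, hNu⟩ := hpm P0 hP0p
    have e1 : M.1 = N := hNu M.1 ⟨M.2, hP0M⟩
    have e2 : (Sig ⟨Q, hQmax⟩).1 = N :=
      hNu _ ⟨(Sig ⟨Q, hQmax⟩).2, le_trans hP0Q (hSig_le ⟨Q, hQmax⟩)⟩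
    exact Subtype.ext (e2.trans e1.symm)
  choose Phi hPhi using hSig_surj
  -- continuity of Sig
  have hSig_cont : Continuous Sig := by
    refine continuous_generateFrom_iff.mpr ?_
    rintro V ⟨b, rfl⟩
    rw [isOpen_iff_forall_mem_open]
    intro Q0 hQ0
    have hb : b ∉ (Sig Q0).1 := hQ0
    have hone_nmem : (1 : A) ∉ (Sig Q0).1 :=
      fun h => (Sig Q0).2.ne_top ((Ideal.eq_top_iff_one _).mpr h)
    have hM0p : (Sig Q0).1.IsPrime := (Sig Q0).2.isPrime
    let T1 : Submonoid A :=
      { carrier := {y | ∃ c x : A, c ∉ (Sig Q0).1 ∧ c * (1 + b * x) = y}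
        one_mem' := ⟨1, 0, hone_nmem, by ring⟩
        mul_mem' := by
          rintro y1 y2 ⟨c1, x1, hc1, rfl⟩ ⟨c2, x2, hc2, rfl⟩
          exact ⟨c1 * c2, x1 + x2 + b * x1 * x2,
            fun h => ((hM0p.mem_or_mem h).elim hc1 hc2), by ring⟩ }
    have h0T : (0 : A) ∈ T1 := by
      by_contra h0
      have hdisj1 : Disjoint ((⊥ : Ideal A) : Set A) (T1 : Set A) := by
        rw [Set.disjoint_left]
        intro y hy hyT
        rw [SetLike.mem_coe, Ideal.mem_bot] at hy
        subst hy; exact h0 hyT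
      obtain ⟨P, hPp, -, hPd⟩ := Ideal.exists_le_prime_disjoint ⊥ T1 hdisj1
      have hPM0 : P ≤ (Sig Q0).1 := by
        intro t ht
        by_contra htM
        exact Set.disjoint_left.mp hPd ht ⟨t, 0, htM, by ring⟩
      have hproper : Ideal.span ({b} : Set A) ⊔ P ≠ ⊤ := by
        intro htop
        have h1 : (1 : A) ∈ Ideal.span ({b} : Set A) ⊔ P := by rw [htop]; trivial
        obtain ⟨xb, i, hiP, hbi⟩ := Ideal.mem_span_singleton_sup.mp h1
        refine Set.disjoint_left.mp hPd hiP ⟨1, -xb, hone_nmem, ?_⟩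
        linear_combination -hbi
      obtain ⟨N, hNmax, hNge⟩ := Ideal.exists_le_maximal _ hproper
      obtain ⟨N', -, hNu⟩ := hpm P hPp
      have e1 : (Sig Q0).1 = N' := hNu _ ⟨(Sig Q0).2, hPM0⟩
      have e2 : N = N' := hNu N ⟨hNmax, le_trans le_sup_right hNge⟩
      have hbN : b ∈ N := hNge (Ideal.mem_sup_left (Ideal.mem_span_singleton_self b))
      exact hb (by rw [e1, ← e2]; exact hbN)
    obtain ⟨c, x, hc, hcx⟩ := h0T
    refine ⟨{Q : MaxSpec L | f c ∈ Q.1}ᶜ, ?_, ?_, ?_⟩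
    · intro Q hQc
      show Q ∈ Sig ⁻¹' {M : MaxSpec A | b ∈ M.1}ᶜ
      intro hbQ
      have h0c : c * (1 + b * x) ∈ Ideal.comap f Q.1 := by
        rw [hcx]; exact Ideal.zero_mem _
      have h1bx : 1 + b * x ∈ Ideal.comap f Q.1 := by
        rcases (hct Q).mem_or_mem h0c with h | h
        · exact absurd (Ideal.mem_comap.mp h) hQc
        · exact h
      have h2 : 1 + b * x ∈ (Sig Q).1 := hSig_le Q h1bx
      have h3 : (1 : A) ∈ (Sig Q).1 := by
        have h4 := Ideal.sub_mem _ h2 (Ideal.mul_mem_right x _ hbQ)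
        simpa using h4
      exact (Sig Q).2.ne_top ((Ideal.eq_top_iff_one _).mpr h3)
    · exact TopologicalSpace.isOpen_generateFrom_of_mem ⟨f c, rfl⟩
    · show f c ∉ Q0.1
      intro hcQ0
      exact hc (hSig_le Q0 (Ideal.mem_comap.mpr hcQ0))
  -- continuity of Phi
  have hPhi_cont : Continuous Phi := by
    refine continuous_generateFrom_iff.mpr ?_
    rintro V ⟨z, rfl⟩
    rw [isOpen_iff_forall_mem_open]
    intro M0 hM0
    obtain ⟨a, s, has⟩ := IsLocalization.exists_mk'_eq (M := S) (S := L) z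
    have hz : ∀ Q : MaxSpec L, (z ∈ Q.1 ↔ f a ∈ Q.1) := by
      intro Q
      rw [← has]
      exact IsLocalization.mk'_mem_iff
    have haM0 : f a ∉ (Phi M0).1 := fun h => hM0 ((hz (Phi M0)).mpr h)
    obtain ⟨p, hp, x, hpx⟩ := hinv (Phi M0).1 (Phi M0).2 a haM0
    obtain ⟨e, fe, α, β, h1, hE, hF⟩ := core hψ hpx
    have he : e ∈ Ideal.comap f (Phi M0).1 :=
      hE _ (hct (Phi M0)) (hdisj _ (Phi M0).2.ne_top) hp
    have heM0 : e ∈ M0.1 := by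
      have h := hSig_le (Phi M0) he
      rwa [hPhi M0] at h
    have hfM0 : fe ∉ M0.1 := by
      intro hfe
      have honeM : (1 : A) ∈ M0.1 := by
        have h := Ideal.add_mem _ (Ideal.mul_mem_left _ α heM0) (Ideal.mul_mem_left _ β hfe)
        rwa [h1] at h
      exact M0.2.ne_top ((Ideal.eq_top_iff_one _).mpr honeM)
    refine ⟨{M : MaxSpec A | fe ∈ M.1}ᶜ, ?_,
      TopologicalSpace.isOpen_generateFrom_of_mem ⟨fe, rfl⟩, hfM0⟩
    intro M hM
    show M ∈ Phi ⁻¹' {Q : MaxSpec L | z ∈ Q.1}ᶜ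
    intro hzQ
    have haQ : a ∈ Ideal.comap f (Phi M).1 := Ideal.mem_comap.mpr ((hz (Phi M)).mp hzQ)
    have hu : x * a ∈ Ideal.comap f (Phi M).1 := Ideal.mul_mem_left _ x haQ
    have hf' : fe ∈ Ideal.comap f (Phi M).1 :=
      hF _ (hct (Phi M)) (hdisj _ (Phi M).2.ne_top) hu
    have hfM : fe ∈ M.1 := by
      have h := hSig_le (Phi M) hf'
      rwa [hPhi M] at h
    exact hM hfM
  exact ⟨Homeomorph.symm ⟨⟨Sig, Phi, fun Q => hSig_inj (hPhi (Sig Q)), hPhi⟩,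
    hSig_cont, hPhi_cont⟩⟩
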